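/- Suppose in addition u₀ ∈ C²([0,R_s];ℝ) satisfies u₀''(r) + ((n−1)/r)u₀'(r) = F'(c_s(r))u₀(r) for 0 < r < R_s, with u₀'(0) = 0 and u₀(R_s) = 1. Then u₀(r) > r c_s'(r)/(R_s c_s'(R_s)) for all 0 ≤ r < R_s. (Lemma 3.3, assertion (5).) -/

import Mathlib

open Set Real Filter Topology

set_option maxHeartbeats 1600000

theorem stmt_5
    (n : ℕ) (hn : 2 ≤ n) (Rs : ℝ) (hRs : 0 < Rs)
    (F F' : ℝ → ℝ) (hF : ∀ x : ℝ, HasDerivAt F (F' x) x) (hF'cont : Continuous F')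
    (cs cs' cs'' cs''' : ℝ → ℝ)
    (hcs1 : ∀ r ∈ Icc (0:ℝ) Rs, HasDerivAt cs (cs' r) r)
    (hcs2 : ∀ r ∈ Icc (0:ℝ) Rs, HasDerivAt cs' (cs'' r) r)
    (hcs3 : ∀ r ∈ Icc (0:ℝ) Rs, HasDerivAt cs'' (cs''' r) r)
    (hcs3cont : ContinuousOn cs''' (Icc 0 Rs))
    (hcsode : ∀ r ∈ Ioo (0:ℝ) Rs, cs'' r + ((n - 1 : ℝ) / r) * cs' r = F (cs r))
    (hcs'0 : cs' 0 = 0) (hcsRs : cs Rs = 1)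
    (hcs'pos : ∀ r ∈ Ioc (0:ℝ) Rs, 0 < cs' r)
    (hF'pos : ∀ r ∈ Icc (0:ℝ) Rs, 0 < F' (cs r))
    (u₀ u₀' u₀'' : ℝ → ℝ)
    (hu₀1 : ∀ r ∈ Icc (0:ℝ) Rs, HasDerivAt u₀ (u₀' r) r)
    (hu₀2 : ∀ r ∈ Icc (0:ℝ) Rs, HasDerivAt u₀' (u₀'' r) r)
    (hu₀2cont : ContinuousOn u₀'' (Icc 0 Rs))
    (hu₀ode : ∀ r ∈ Ioo (0:ℝ) Rs, u₀'' r + ((n - 1 : ℝ) / r) * u₀' r = F' (cs r) * u₀ r)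
    (hu₀'0 : u₀' 0 = 0) (hu₀Rs : u₀ Rs = 1) :
    ∀ r ∈ Ico (0:ℝ) Rs, u₀ r > r * cs' r / (Rs * cs' Rs) := by
  obtain ⟨k, rfl⟩ : ∃ k, n = k + 2 := ⟨n - 2, by omega⟩
  clear hn
  set c : ℝ := (k : ℝ) + 1 with hc
  have hcoef : ((k + 2 : ℕ) : ℝ) - 1 = c := by push_cast [hc]; ring
  rw [show (Ioo (0:ℝ) Rs) = Ioo (0:ℝ) Rs from rfl] at hcsode hu₀ode
  simp only [hcoef] at hcsode hu₀ode
  have hcpos : 0 < c := by positivity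
  have h0mem : (0:ℝ) ∈ Icc (0:ℝ) Rs := ⟨le_refl 0, hRs.le⟩
  have hRsmem : Rs ∈ Icc (0:ℝ) Rs := ⟨hRs.le, le_refl Rs⟩
  have hu₀c : ContinuousOn u₀ (Icc 0 Rs) :=
    fun x hx => (hu₀1 x hx).continuousAt.continuousWithinAt
  have hu₀'c : ContinuousOn u₀' (Icc 0 Rs) :=
    fun x hx => (hu₀2 x hx).continuousAt.continuousWithinAt
  have hcsc : ContinuousOn cs (Icc 0 Rs) :=
    fun x hx => (hcs1 x hx).continuousAt.continuousWithinAt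
  have hcs'c : ContinuousOn cs' (Icc 0 Rs) :=
    fun x hx => (hcs2 x hx).continuousAt.continuousWithinAt
  have hcs''c : ContinuousOn cs'' (Icc 0 Rs) :=
    fun x hx => (hcs3 x hx).continuousAt.continuousWithinAt
  -- local decrease from a critical point with negative second derivative
  have key : ∀ r₀ ∈ Ico (0:ℝ) Rs, u₀' r₀ = 0 → u₀'' r₀ < 0 →
      ∃ x ∈ Icc (0:ℝ) Rs, u₀ x < u₀ r₀ := by
    intro r₀ hr₀ hd hdd
    have hr₀mem : r₀ ∈ Icc (0:ℝ) Rs := ⟨hr₀.1, hr₀.2.le⟩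
    -- find δ > 0 with u₀'' < 0 on Icc r₀ (r₀+δ) ⊆ Icc 0 Rs
    have hev : ∀ᶠ x in 𝓝[Icc (0:ℝ) Rs] r₀, u₀'' x < 0 := by
      have hcw : ContinuousWithinAt u₀'' (Icc 0 Rs) r₀ := hu₀2cont.continuousWithinAt hr₀mem
      exact hcw.eventually_lt continuousWithinAt_const hdd
    rw [eventually_iff, Metric.mem_nhdsWithin_iff] at hev
    obtain ⟨ε, hεpos, hε⟩ := hev
    set δ : ℝ := min (ε / 2) (Rs - r₀) with hδ
    have hδpos : 0 < δ := lt_min (by linarith) (by linarith [hr₀.2])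
    have hsub : Icc r₀ (r₀ + δ) ⊆ Icc (0:ℝ) Rs := by
      apply Icc_subset_Icc hr₀.1
      have : δ ≤ Rs - r₀ := min_le_right _ _
      linarith
    have hneg : ∀ x ∈ Icc r₀ (r₀ + δ), u₀'' x < 0 := by
      intro x hx
      have h1 : δ ≤ ε / 2 := min_le_left _ _
      have hd2 : dist x r₀ ≤ δ := by
        rw [Real.dist_eq, abs_le]
        constructor <;> [linarith [hx.1]; linarith [hx.2]]
      exact hε ⟨by simpa [Metric.mem_ball] using lt_of_le_of_lt hd2 (by linarith), hsub hx⟩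
    -- u₀' strictly decreasing on [r₀, r₀+δ]
    have hanti' : StrictAntiOn u₀' (Icc r₀ (r₀ + δ)) := by
      apply strictAntiOn_of_deriv_neg (convex_Icc _ _) (hu₀'c.mono hsub)
      intro x hx
      rw [interior_Icc] at hx
      rw [(hu₀2 x (hsub ⟨hx.1.le, hx.2.le⟩)).deriv]
      exact hneg x ⟨hx.1.le, hx.2.le⟩
    have h'neg : ∀ x ∈ Ioc r₀ (r₀ + δ), u₀' x < 0 := by
      intro x hx
      have := hanti' (left_mem_Icc.2 (by linarith)) ⟨hx.1.le, hx.2⟩ hx.1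
      rwa [hd] at this
    have hanti : StrictAntiOn u₀ (Icc r₀ (r₀ + δ)) := by
      apply strictAntiOn_of_deriv_neg (convex_Icc _ _) (hu₀c.mono hsub)
      intro x hx
      rw [interior_Icc] at hx
      rw [(hu₀1 x (hsub ⟨hx.1.le, hx.2.le⟩)).deriv]
      exact h'neg x ⟨hx.1, hx.2.le⟩
    refine ⟨r₀ + δ, hsub (right_mem_Icc.2 (by linarith)), ?_⟩
    exact hanti (left_mem_Icc.2 (by linarith)) (right_mem_Icc.2 (by linarith)) (by linarith)
  -- nonnegativity
  -- the limiting value of the ODE at r = 0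
  have hlim0 : (1 + c) * u₀'' 0 = F' (cs 0) * u₀ 0 := by
    have hne : (𝓝[Ioo (0:ℝ) Rs] (0:ℝ)).NeBot := by
      rw [← mem_closure_iff_nhdsWithin_neBot, closure_Ioo hRs.ne]
      exact h0mem
    have t1 : Tendsto u₀'' (𝓝[Ioo (0:ℝ) Rs] 0) (𝓝 (u₀'' 0)) :=
      (hu₀2cont.continuousWithinAt h0mem).mono_left (nhdsWithin_mono _ Ioo_subset_Icc_self)
    have tslope : Tendsto (fun r => u₀' r / r) (𝓝[Ioo (0:ℝ) Rs] 0) (𝓝 (u₀'' 0)) := by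
      have h := hasDerivAt_iff_tendsto_slope.mp (hu₀2 0 h0mem)
      have h2 : Tendsto (slope u₀' 0) (𝓝[Ioo (0:ℝ) Rs] 0) (𝓝 (u₀'' 0)) :=
        h.mono_left (nhdsWithin_mono _ (fun x hx => ne_of_gt hx.1))
      refine h2.congr' ?_
      filter_upwards [self_mem_nhdsWithin] with r hr
      simp [slope_def_field, hu₀'0]
    have t2 : Tendsto (fun r => F' (cs r) * u₀ r - c * (u₀' r / r)) (𝓝[Ioo (0:ℝ) Rs] 0)
        (𝓝 (F' (cs 0) * u₀ 0 - c * u₀'' 0)) := by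
      have tF : Tendsto (fun r => F' (cs r) * u₀ r) (𝓝[Ioo (0:ℝ) Rs] 0)
          (𝓝 (F' (cs 0) * u₀ 0)) := by
        have hcw : ContinuousWithinAt (fun r => F' (cs r) * u₀ r) (Icc 0 Rs) 0 :=
          ((hF'cont.continuousAt.comp_continuousWithinAt (hcsc.continuousWithinAt h0mem)).mul
            (hu₀c.continuousWithinAt h0mem))
        exact hcw.mono_left (nhdsWithin_mono _ Ioo_subset_Icc_self)
      exact tF.sub (tslope.const_mul c)
    have heq : u₀'' =ᶠ[𝓝[Ioo (0:ℝ) Rs] 0] fun r => F' (cs r) * u₀ r - c * (u₀' r / r) := by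
      filter_upwards [self_mem_nhdsWithin] with r hr
      have h := hu₀ode r hr
      have hrne : r ≠ 0 := ne_of_gt hr.1
      field_simp at h ⊢
      linarith
    have := tendsto_nhds_unique (t1.congr' heq) t2
    linarith
  have hnn : ∀ r ∈ Icc (0:ℝ) Rs, 0 ≤ u₀ r := by
    by_contra hcon
    push_neg at hcon
    obtain ⟨a, ha, hau⟩ := hcon
    obtain ⟨r₀, hr₀mem, hmin⟩ := isCompact_Icc.exists_isMinOn (nonempty_Icc.2 hRs.le) hu₀c
    have hm : u₀ r₀ < 0 := lt_of_le_of_lt (hmin ha) hau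
    have hr₀Rs : r₀ < Rs := by
      rcases lt_or_eq_of_le hr₀mem.2 with h | h
      · exact h
      · rw [h, hu₀Rs] at hm; linarith
    have hd0 : u₀' r₀ = 0 := by
      rcases eq_or_lt_of_le hr₀mem.1 with h0 | h0
      · rw [← h0]; exact hu₀'0
      · exact (hmin.isLocalMin (Icc_mem_nhds h0 hr₀Rs)).hasDerivAt_eq_zero (hu₀1 r₀ hr₀mem)
    have hdd : u₀'' r₀ < 0 := by
      rcases eq_or_lt_of_le hr₀mem.1 with h0 | h0
      · rw [← h0]
        rw [← h0] at hm
        have hFp := hF'pos 0 h0mem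
        nlinarith [hlim0]
      · have h := hu₀ode r₀ ⟨h0, hr₀Rs⟩
        rw [hd0] at h
        have hFp := hF'pos r₀ hr₀mem
        nlinarith [h]
    obtain ⟨x, hx, hlt⟩ := key r₀ ⟨hr₀mem.1, hr₀Rs⟩ hd0 hdd
    exact absurd (hmin hx) (not_le.2 hlt)
  -- positivity
  have hpos : ∀ r ∈ Icc (0:ℝ) Rs, 0 < u₀ r := by
    by_contra hcon
    push_neg at hcon
    obtain ⟨a, ha, hau⟩ := hcon
    have hZa : u₀ a = 0 := le_antisymm hau (hnn a ha)
    set Z := Icc (0:ℝ) Rs ∩ u₀ ⁻¹' {0} with hZ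
    have hZne : Z.Nonempty := ⟨a, ha, hZa⟩
    have hZclosed : IsClosed Z :=
      hu₀c.preimage_isClosed_of_isClosed isClosed_Icc isClosed_singleton
    have hZcompact : IsCompact Z := isCompact_Icc.of_isClosed_subset hZclosed inter_subset_left
    set r₀ := sSup Z with hr₀def
    have hr₀Z : r₀ ∈ Z := hZcompact.sSup_mem hZne
    have hr₀mem : r₀ ∈ Icc (0:ℝ) Rs := hr₀Z.1
    have hr₀u : u₀ r₀ = 0 := hr₀Z.2
    have hr₀Rs : r₀ < Rs := by
      rcases lt_or_eq_of_le hr₀mem.2 with h | h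
      · exact h
      · rw [h, hu₀Rs] at hr₀u; norm_num at hr₀u
    have hub : ∀ z ∈ Z, z ≤ r₀ := fun z hz => le_csSup hZcompact.bddAbove hz
    have hafter : ∀ x, r₀ < x → x ≤ Rs → 0 < u₀ x := by
      intro x hx hxRs
      have hxmem : x ∈ Icc (0:ℝ) Rs := ⟨le_trans hr₀mem.1 hx.le, hxRs⟩
      rcases lt_or_eq_of_le (hnn x hxmem) with h | h
      · exact h
      · exact absurd (hub x ⟨hxmem, h.symm⟩) (not_le.2 hx)
    have hd0 : u₀' r₀ = 0 := by
      rcases eq_or_lt_of_le hr₀mem.1 with h0 | h0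
      · rw [← h0]; exact hu₀'0
      · have hminon : IsMinOn u₀ (Icc (0:ℝ) Rs) r₀ := fun x hx => by
          simp only [mem_setOf_eq, hr₀u]; exact hnn x hx
        exact (hminon.isLocalMin (Icc_mem_nhds h0 hr₀Rs)).hasDerivAt_eq_zero (hu₀1 r₀ hr₀mem)
    -- bound on the coefficient
    obtain ⟨A₀, hA₀⟩ := isCompact_Icc.exists_bound_of_continuousOn
      (hF'cont.comp_continuousOn hcsc)
    set A : ℝ := max A₀ 1 with hA
    have hA1 : (1:ℝ) ≤ A := le_max_right _ _
    have hApos : 0 < A := lt_of_lt_of_le one_pos hA1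
    have hAb : ∀ x ∈ Icc (0:ℝ) Rs, F' (cs x) ≤ A := fun x hx =>
      le_trans (le_trans (le_abs_self _) (hA₀ x hx)) (le_max_left _ _)
    set δ : ℝ := min ((Rs - r₀) / 2) (1 / A) with hδdef
    have hδpos : 0 < δ := lt_min (by linarith) (by positivity)
    have hδA : A * δ ≤ 1 := by
      have : δ ≤ 1 / A := min_le_right _ _
      calc A * δ ≤ A * (1 / A) := by nlinarith
        _ = 1 := by field_simp
    have hδ1 : δ ≤ 1 := by nlinarith
    set b : ℝ := r₀ + δ with hbdef
    have hbRs : b < Rs := by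
      have : δ ≤ (Rs - r₀) / 2 := min_le_left _ _
      simp only [hbdef]; linarith
    have hsub : Icc r₀ b ⊆ Icc (0:ℝ) Rs := Icc_subset_Icc hr₀mem.1 hbRs.le
    -- the max of u₀ on [r₀, b]
    obtain ⟨rM, hrMmem, hrMmax⟩ := isCompact_Icc.exists_isMaxOn
      (nonempty_Icc.2 (by simp only [hbdef]; linarith)) (hu₀c.mono hsub)
    set M : ℝ := u₀ rM with hM
    have hMpos : 0 < M := by
      have hmid : r₀ + δ / 2 ∈ Icc r₀ b := ⟨by linarith, by simp only [hbdef]; linarith⟩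
      have h1 : 0 < u₀ (r₀ + δ / 2) := hafter _ (by linarith) (by
        have := hsub hmid; exact this.2)
      exact lt_of_lt_of_le h1 (hrMmax hmid)
    have hMb : ∀ s ∈ Icc r₀ b, u₀ s ≤ M := fun s hs => hrMmax hs
    -- first estimate: u₀' r ≤ A * M * (r - r₀) on (r₀, b]
    have est1 : ∀ r ∈ Ioc r₀ b, u₀' r ≤ A * M * (r - r₀) := by
      intro r hrr
      have hrmem : r ∈ Icc (0:ℝ) Rs := hsub ⟨hrr.1.le, hrr.2⟩
      have hrpos : 0 < r := lt_of_le_of_lt hr₀mem.1 hrr.1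
      set φ : ℝ → ℝ := fun s => s ^ (k + 1) * u₀' s with hφ
      set ψ : ℝ → ℝ := fun s => ((k:ℝ) + 1) * s ^ k * u₀' s + s ^ (k + 1) * u₀'' s with hψ
      have hφd : ∀ s ∈ Icc r₀ r, HasDerivAt φ (ψ s) s := by
        intro s hs
        have hsmem : s ∈ Icc (0:ℝ) Rs := hsub ⟨hs.1, le_trans hs.2 hrr.2⟩
        have h1 := (hasDerivAt_pow (k + 1) s).mul (hu₀2 s hsmem)
        refine h1.congr_deriv ?_
        push_cast
        ring
      have hψc : ContinuousOn ψ (Icc r₀ r) := by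
        have hs : Icc r₀ r ⊆ Icc (0:ℝ) Rs := fun s hs => hsub ⟨hs.1, le_trans hs.2 hrr.2⟩
        exact ((continuousOn_const.mul (continuous_pow k).continuousOn).mul
          (hu₀'c.mono hs)).add (((continuous_pow (k+1)).continuousOn).mul (hu₀2cont.mono hs))
      have hψint : IntervalIntegrable ψ MeasureTheory.volume r₀ r := by
        apply ContinuousOn.intervalIntegrable
        rwa [uIcc_of_le hrr.1.le]
      have hftc : ∫ s in r₀..r, ψ s = φ r - φ r₀ := by
        apply intervalIntegral.integral_eq_sub_of_hasDerivAt
        · intro t ht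
          rw [uIcc_of_le hrr.1.le] at ht
          exact hφd t ht
        · exact hψint
      have hψb : ∀ s ∈ Icc r₀ r, ψ s ≤ r ^ (k + 1) * (A * M) := by
        intro s hs
        have hsmem : s ∈ Icc (0:ℝ) Rs := hsub ⟨hs.1, le_trans hs.2 hrr.2⟩
        rcases eq_or_lt_of_le hsmem.1 with h0 | h0
        · have hs0 : s = 0 := h0.symm
          have hψ0 : ψ s = 0 := by
            simp only [hψ, hs0, hu₀'0, mul_zero, zero_add]
            simp
          rw [hψ0]
          positivity
        · have hsIoo : s ∈ Ioo (0:ℝ) Rs := ⟨h0, lt_of_le_of_lt (le_trans hs.2 hrr.2) hbRs⟩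
          have hode := hu₀ode s hsIoo
          have hψeq : ψ s = s ^ (k + 1) * (F' (cs s) * u₀ s) := by
            simp only [hψ]
            have : u₀'' s = F' (cs s) * u₀ s - c / s * u₀' s := by linarith
            rw [this, hc]
            field_simp
            ring
          rw [hψeq]
          have h1 : F' (cs s) * u₀ s ≤ A * M := by
            have hu1 : u₀ s ≤ M := hMb s ⟨hs.1, le_trans hs.2 hrr.2⟩
            have hu2 : 0 ≤ u₀ s := hnn s hsmem
            have hf1 : 0 < F' (cs s) := hF'pos s hsmem
            have hf2 : F' (cs s) ≤ A := hAb s hsmem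
            exact mul_le_mul hf2 hu1 hu2 hApos.le
          have h2 : s ^ (k + 1) ≤ r ^ (k + 1) := pow_le_pow_left₀ h0.le
            (le_trans hs.2 (le_refl r)) _
          have h3 : (0:ℝ) ≤ s ^ (k+1) := by positivity
          calc s ^ (k+1) * (F' (cs s) * u₀ s) ≤ s ^ (k+1) * (A * M) :=
              mul_le_mul_of_nonneg_left h1 h3
            _ ≤ r ^ (k+1) * (A * M) := mul_le_mul_of_nonneg_right h2
              (by positivity)
      have hint2 : ∫ s in r₀..r, ψ s ≤ ∫ _ in r₀..r, r ^ (k + 1) * (A * M) := by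
        apply intervalIntegral.integral_mono_on hrr.1.le hψint
          intervalIntegrable_const hψb
      rw [hftc] at hint2
      rw [intervalIntegral.integral_const] at hint2
      have hφr₀ : φ r₀ = 0 := by simp only [hφ, hd0, mul_zero]
      rw [hφr₀, sub_zero] at hint2
      have hrk : 0 < r ^ (k + 1) := by positivity
      have : r ^ (k + 1) * u₀' r ≤ r ^ (k + 1) * (A * M * (r - r₀)) := by
        simp only [hφ, smul_eq_mul] at hint2
        have h4 : (r - r₀) * (r ^ (k + 1) * (A * M)) = r ^ (k + 1) * (A * M * (r - r₀)) := by
          ring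
        linarith [hint2, h4.le, h4.ge]
      exact le_of_mul_le_mul_left this hrk
    -- second estimate: integrate u₀'
    have hrM0 : r₀ < rM := by
      rcases eq_or_lt_of_le hrMmem.1 with h | h
      · rw [← h, hr₀u] at hM; rw [hM] at hMpos; norm_num at hMpos
      · exact h
    have hftc2 : ∫ s in r₀..rM, u₀' s = u₀ rM - u₀ r₀ := by
      apply intervalIntegral.integral_eq_sub_of_hasDerivAt
      · intro t ht
        rw [uIcc_of_le hrMmem.1] at ht
        exact hu₀1 t (hsub ⟨ht.1, le_trans ht.2 hrMmem.2⟩)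
      · apply ContinuousOn.intervalIntegrable
        rw [uIcc_of_le hrMmem.1]
        exact hu₀'c.mono (fun s hs => hsub ⟨hs.1, le_trans hs.2 hrMmem.2⟩)
    have hu'int : IntervalIntegrable u₀' MeasureTheory.volume r₀ rM := by
      apply ContinuousOn.intervalIntegrable
      rw [uIcc_of_le hrMmem.1]
      exact hu₀'c.mono (fun s hs => hsub ⟨hs.1, le_trans hs.2 hrMmem.2⟩)
    have hgftc : ∫ s in r₀..rM, A * M * (s - r₀) = A * M / 2 * (rM - r₀) ^ 2 := by
      have : ∀ t ∈ uIcc r₀ rM,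
          HasDerivAt (fun s => A * M / 2 * (s - r₀) ^ 2) (A * M * (t - r₀)) t := by
        intro t _
        have h1 : HasDerivAt (fun s => (s - r₀) ^ 2) (2 * (t - r₀)) t := by
          have := ((hasDerivAt_id t).sub_const r₀).pow 2
          refine this.congr_deriv ?_
          simp [mul_comm]
        have := h1.const_mul (A * M / 2)
        refine this.congr_deriv ?_
        ring
      rw [intervalIntegral.integral_eq_sub_of_hasDerivAt this]
      · simp
      · apply Continuous.intervalIntegrable
        continuity
    have hint3 : ∫ s in r₀..rM, u₀' s ≤ ∫ s in r₀..rM, A * M * (s - r₀) := by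
      apply intervalIntegral.integral_mono_on hrMmem.1 hu'int
      · apply Continuous.intervalIntegrable; continuity
      · intro s hs
        rcases eq_or_lt_of_le hs.1 with h | h
        · rw [← h, hd0]
          nlinarith [mul_pos hApos hMpos]
        · exact est1 s ⟨h, le_trans hs.2 hrMmem.2⟩
    rw [hftc2, hgftc, hr₀u, sub_zero] at hint3
    have hfin : M ≤ A * M / 2 * δ ^ 2 := by
      have h2 : rM - r₀ ≤ δ := by
        have := hrMmem.2; simp only [hbdef] at this; linarith
      have h1 : (rM - r₀) ^ 2 ≤ δ ^ 2 := by nlinarith [hrM0]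
      have h3 : A * M / 2 * (rM - r₀) ^ 2 ≤ A * M / 2 * δ ^ 2 :=
        mul_le_mul_of_nonneg_left h1 (by positivity)
      linarith [hint3]
    have hAd2 : A * δ ^ 2 ≤ 1 := by
      nlinarith [mul_le_mul_of_nonneg_right hδA hδpos.le]
    have hhalf : A * M / 2 * δ ^ 2 ≤ M / 2 := by
      nlinarith [mul_le_mul_of_nonneg_right hAd2 hMpos.le]
    linarith
  -- third derivative formula
  have hcs''' : ∀ x ∈ Ioo (0:ℝ) Rs,
      cs''' x = F' (cs x) * cs' x - c / x * cs'' x + c / x ^ 2 * cs' x := by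
    intro x hx
    have hxmem : x ∈ Icc (0:ℝ) Rs := Ioo_subset_Icc_self hx
    have hxne : x ≠ 0 := ne_of_gt hx.1
    have h1 : HasDerivAt (fun s => F (cs s)) (F' (cs x) * cs' x) x :=
      (hF (cs x)).comp x (hcs1 x hxmem)
    have h2 : HasDerivAt (fun s => c / s * cs' s)
        ((-(c / x ^ 2)) * cs' x + c / x * cs'' x) x := by
      have hinv : HasDerivAt (fun s : ℝ => c / s) (-(c / x ^ 2)) x := by
        have h := (hasDerivAt_inv hxne).const_mul c
        simp only [div_eq_mul_inv]
        refine h.congr_deriv ?_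
        ring
      exact hinv.mul (hcs2 x hxmem)
    have hg : HasDerivAt (fun s => F (cs s) - c / s * cs' s)
        (F' (cs x) * cs' x - ((-(c / x ^ 2)) * cs' x + c / x * cs'' x)) x := h1.sub h2
    have heq : cs'' =ᶠ[𝓝 x] fun s => F (cs s) - c / s * cs' s := by
      filter_upwards [Ioo_mem_nhds hx.1 hx.2] with s hs
      have := hcsode s hs
      linarith
    have hD : HasDerivAt cs''
        (F' (cs x) * cs' x - ((-(c / x ^ 2)) * cs' x + c / x * cs'' x)) x :=
      hg.congr_of_eventuallyEq heq
    have := hD.unique (hcs3 x hxmem)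
    rw [← this]
    ring
  -- Wronskian is negative
  have hWneg : ∀ x ∈ Ioc (0:ℝ) Rs, u₀' x * cs' x - u₀ x * cs'' x < 0 := by
    set W : ℝ → ℝ := fun x => x ^ (k + 1) * (u₀' x * cs' x - u₀ x * cs'' x) with hW
    have hWc : ContinuousOn W (Icc 0 Rs) :=
      (continuous_pow (k+1)).continuousOn.mul
        ((hu₀'c.mul hcs'c).sub (hu₀c.mul hcs''c))
    have hWanti : StrictAntiOn W (Icc 0 Rs) := by
      apply strictAntiOn_of_deriv_neg (convex_Icc _ _) hWc
      intro x hx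
      rw [interior_Icc] at hx
      have hxmem : x ∈ Icc (0:ℝ) Rs := Ioo_subset_Icc_self hx
      have hxne : x ≠ 0 := ne_of_gt hx.1
      have hD : HasDerivAt W
          (((k:ℝ) + 1) * x ^ k * (u₀' x * cs' x - u₀ x * cs'' x) +
            x ^ (k + 1) * ((u₀'' x * cs' x + u₀' x * cs'' x) -
              (u₀' x * cs'' x + u₀ x * cs''' x))) x := by
        have h1 := (hasDerivAt_pow (k + 1) x).mul
          (((hu₀2 x hxmem).mul (hcs2 x hxmem)).sub ((hu₀1 x hxmem).mul (hcs3 x hxmem)))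
        refine h1.congr_deriv ?_
        simp only [Pi.sub_apply, Pi.mul_apply]
        push_cast
        ring
      rw [hD.deriv]
      have hode := hu₀ode x hx
      have hu'' : u₀'' x = F' (cs x) * u₀ x - c / x * u₀' x := by linarith
      have hc''' := hcs''' x hx
      have hDeq : ((k:ℝ) + 1) * x ^ k * (u₀' x * cs' x - u₀ x * cs'' x) +
            x ^ (k + 1) * ((u₀'' x * cs' x + u₀' x * cs'' x) -
              (u₀' x * cs'' x + u₀ x * cs''' x)) =
          -(c * x ^ k * u₀ x * cs' x / x) := by
        rw [hu'', hc''', hc]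
        field_simp
        ring
      rw [hDeq]
      have h1 : 0 < u₀ x := hpos x hxmem
      have h2 : 0 < cs' x := hcs'pos x ⟨hx.1, hx.2.le⟩
      have h3 : 0 < x ^ k := pow_pos hx.1 k
      exact neg_lt_zero.mpr (div_pos (mul_pos (mul_pos (mul_pos hcpos h3) h1) h2) hx.1)
    intro x hx
    have hxmem : x ∈ Icc (0:ℝ) Rs := ⟨hx.1.le, hx.2⟩
    have hlt : W x < W 0 := hWanti h0mem hxmem hx.1
    have hW0 : W 0 = 0 := by simp [hW]
    rw [hW0] at hlt
    by_contra hge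
    push_neg at hge
    have : 0 ≤ W x := by
      simp only [hW]
      exact mul_nonneg (pow_nonneg hx.1.le _) hge
    linarith
  -- ratio comparison
  have hratio : ∀ r ∈ Ioo (0:ℝ) Rs, cs' r / cs' Rs < u₀ r := by
    intro r hr
    have hcs'Rs : 0 < cs' Rs := hcs'pos Rs ⟨hRs, le_refl Rs⟩
    have hcr : 0 < cs' r := hcs'pos r ⟨hr.1, hr.2.le⟩
    set ρ : ℝ → ℝ := fun x => u₀ x / cs' x with hρ
    have hsub : Icc r Rs ⊆ Icc (0:ℝ) Rs := Icc_subset_Icc hr.1.le le_rfl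
    have hcs'ne : ∀ x ∈ Icc r Rs, cs' x ≠ 0 := fun x hx =>
      (hcs'pos x ⟨lt_of_lt_of_le hr.1 hx.1, hx.2⟩).ne'
    have hρc : ContinuousOn ρ (Icc r Rs) :=
      (hu₀c.mono hsub).div (hcs'c.mono hsub) hcs'ne
    have hρanti : StrictAntiOn ρ (Icc r Rs) := by
      apply strictAntiOn_of_deriv_neg (convex_Icc _ _) hρc
      intro x hx
      rw [interior_Icc] at hx
      have hxIoc : x ∈ Ioc (0:ℝ) Rs := ⟨lt_trans hr.1 hx.1, hx.2.le⟩
      have hxmem : x ∈ Icc (0:ℝ) Rs := ⟨hxIoc.1.le, hxIoc.2⟩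
      have hD : HasDerivAt ρ
          ((u₀' x * cs' x - u₀ x * cs'' x) / (cs' x) ^ 2) x :=
        (hu₀1 x hxmem).div (hcs2 x hxmem) (hcs'pos x hxIoc).ne'
      rw [hD.deriv]
      exact div_neg_of_neg_of_pos (hWneg x hxIoc) (pow_pos (hcs'pos x hxIoc) 2)
    have hlt : ρ Rs < ρ r :=
      hρanti (left_mem_Icc.2 hr.2.le) (right_mem_Icc.2 hr.2.le) hr.2
    simp only [hρ, hu₀Rs] at hlt
    rw [div_lt_div_iff₀ hcs'Rs hcr] at hlt
    rw [div_lt_iff₀ hcs'Rs]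
    linarith
  -- conclusion
  intro r hr
  have hcs'Rs : 0 < cs' Rs := hcs'pos Rs ⟨hRs, le_refl Rs⟩
  rcases eq_or_lt_of_le hr.1 with h0 | h0
  · rw [← h0]
    simpa using hpos 0 h0mem
  · have h1 : cs' r / cs' Rs < u₀ r := hratio r ⟨h0, hr.2⟩
    have hcr : 0 < cs' r := hcs'pos r ⟨h0, hr.2.le⟩
    have h2 : r * cs' r / (Rs * cs' Rs) < cs' r / cs' Rs := by
      rw [div_lt_div_iff₀ (by positivity) (by positivity)]
      nlinarith [mul_pos hcr hcs'Rs, hr.2]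
    linarith
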